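/- Let W and T be real n×n matrices with W symmetric positive definite and T symmetric positive semidefinite, let α, β > 0, and set S = W^{-1/2} T W^{-1/2}. Then the TTSCSP iteration matrix satisfies the similarity identity G_{α,β} = W^{-1/2} · (I + βS)^{-1}(S - βI)(αI + S)^{-1}(I - αS) · W^{1/2}; in particular G_{α,β} and Ĝ_{α,β} = (I + βS)^{-1}(S - βI)(αI + S)^{-1}(I - αS) have the same eigenvalues. -/

import Mathlib

open Matrix

open scoped ComplexOrder in
/-- The positive semidefinite square root of a positive semidefinite matrix (the definition
`Matrix.PosSemidef.sqrt` of Mathlib, December 2024, since removed from Mathlib). -/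
noncomputable def Matrix.PosSemidef.sqrt {n 𝕜 : Type*} [Fintype n] [DecidableEq n] [RCLike 𝕜]
    {A : Matrix n n 𝕜} (hA : A.PosSemidef) : Matrix n n 𝕜 :=
  (hA.1.eigenvectorUnitary : Matrix n n 𝕜) * diagonal (((↑) : ℝ → 𝕜) ∘ (√·) ∘ hA.1.eigenvalues) *
    ((star hA.1.eigenvectorUnitary : unitaryGroup n 𝕜) : Matrix n n 𝕜)

open scoped ComplexOrder in
theorem Matrix.PosSemidef.sqrt_mul_self_aux {n 𝕜 : Type*} [Fintype n] [DecidableEq n] [RCLike 𝕜]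
    {A : Matrix n n 𝕜} (hA : A.PosSemidef) : hA.sqrt * hA.sqrt = A := by
  unfold Matrix.PosSemidef.sqrt
  have hU : ((star hA.1.eigenvectorUnitary : unitaryGroup n 𝕜) : Matrix n n 𝕜) *
      (hA.1.eigenvectorUnitary : Matrix n n 𝕜) = 1 := by simp
  have hd : diagonal (((↑) : ℝ → 𝕜) ∘ (√·) ∘ hA.1.eigenvalues) *
      diagonal (((↑) : ℝ → 𝕜) ∘ (√·) ∘ hA.1.eigenvalues) =
      diagonal (RCLike.ofReal ∘ hA.1.eigenvalues) := by
    rw [diagonal_mul_diagonal]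
    congr 1
    funext i
    simp only [Function.comp_apply]
    rw [← RCLike.ofReal_mul, Real.mul_self_sqrt (hA.eigenvalues_nonneg i)]
  conv_rhs => rw [hA.1.spectral_theorem, Unitary.conjStarAlgAut_apply, ← hd]
  simp only [mul_assoc]
  rw [← mul_assoc _ (hA.1.eigenvectorUnitary : Matrix n n 𝕜), hU, one_mul]
  rfl

/-- **Similarity of `G_{α,β}` and `Ĝ_{α,β}`.** With `S = W^{-1/2} T W^{-1/2}`, the TTSCSP
iteration matrix satisfies
`G_{α,β} = W^{-1/2} (I + βS)⁻¹ (S - βI) (αI + S)⁻¹ (I - αS) W^{1/2}`;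
in particular `G_{α,β}` and `Ĝ_{α,β} = (I + βS)⁻¹ (S - βI) (αI + S)⁻¹ (I - αS)` have the
same eigenvalues. -/
theorem ttscsp_similarity
    {n : ℕ}
    (W T : Matrix (Fin n) (Fin n) ℝ)
    (hW : W.PosDef) (hT : T.PosSemidef)
    (α β : ℝ) (hα : 0 < α) (hβ : 0 < β)
    (S : Matrix (Fin n) (Fin n) ℝ)
    (hSdef : S = (hW.posSemidef.sqrt)⁻¹ * T * (hW.posSemidef.sqrt)⁻¹) :
    (W + β • T)⁻¹ * (T - β • W) * (α • W + T)⁻¹ * (W - α • T) =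
      (hW.posSemidef.sqrt)⁻¹ *
        ((1 + β • S)⁻¹ * (S - β • (1 : Matrix (Fin n) (Fin n) ℝ)) *
          (α • (1 : Matrix (Fin n) (Fin n) ℝ) + S)⁻¹ * (1 - α • S)) *
        hW.posSemidef.sqrt ∧
    spectrum ℂ
        (((W + β • T)⁻¹ * (T - β • W) * (α • W + T)⁻¹ * (W - α • T)).map Complex.ofReal) =
      spectrum ℂ
        (((1 + β • S)⁻¹ * (S - β • (1 : Matrix (Fin n) (Fin n) ℝ)) *
          (α • (1 : Matrix (Fin n) (Fin n) ℝ) + S)⁻¹ * (1 - α • S)).map Complex.ofReal) := by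
  set R := hW.posSemidef.sqrt with hRdef
  have hRR : R * R = W := hW.posSemidef.sqrt_mul_self_aux
  have hRunit : IsUnit R := by
    have hdet : R.det * R.det = W.det := by rw [← det_mul, hRR]
    have : R.det ≠ 0 := by
      intro h
      have := hW.det_pos
      rw [← hdet, h, mul_zero] at this
      exact lt_irrefl 0 this
    exact isUnit_iff_isUnit_det _ |>.2 this.isUnit
  have hRiR : R⁻¹ * R = 1 := nonsing_inv_mul _ (isUnit_iff_isUnit_det _ |>.1 hRunit)
  have hRRi : R * R⁻¹ = 1 := mul_nonsing_inv _ (isUnit_iff_isUnit_det _ |>.1 hRunit)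
  have hRSR : R * S * R = T := by
    rw [hSdef, ← mul_assoc, ← mul_assoc, hRRi, one_mul, mul_assoc, hRiR, mul_one]
  have hb : R * (β • S) * R = β • T := by rw [mul_smul_comm, smul_mul_assoc, hRSR]
  have hb' : R * (β • (1 : Matrix (Fin n) (Fin n) ℝ)) * R = β • W := by
    rw [mul_smul_comm, smul_mul_assoc, mul_one, hRR]
  have ha : R * (α • S) * R = α • T := by rw [mul_smul_comm, smul_mul_assoc, hRSR]
  have ha' : R * (α • (1 : Matrix (Fin n) (Fin n) ℝ)) * R = α • W := by
    rw [mul_smul_comm, smul_mul_assoc, mul_one, hRR]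
  have e1 : W + β • T = R * (1 + β • S) * R := by
    rw [mul_add, add_mul, mul_one, hRR, hb]
  have e2 : T - β • W = R * (S - β • (1 : Matrix (Fin n) (Fin n) ℝ)) * R := by
    rw [mul_sub, sub_mul, hRSR, hb']
  have e3 : α • W + T = R * (α • (1 : Matrix (Fin n) (Fin n) ℝ) + S) * R := by
    rw [mul_add, add_mul, ha', hRSR]
  have e4 : W - α • T = R * (1 - α • S) * R := by
    rw [mul_sub, sub_mul, mul_one, hRR, ha]
  have hmain :
      (W + β • T)⁻¹ * (T - β • W) * (α • W + T)⁻¹ * (W - α • T) =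
        R⁻¹ * ((1 + β • S)⁻¹ * (S - β • (1 : Matrix (Fin n) (Fin n) ℝ)) *
          (α • (1 : Matrix (Fin n) (Fin n) ℝ) + S)⁻¹ * (1 - α • S)) * R := by
    rw [e1, e2, e3, e4, Matrix.mul_inv_rev, Matrix.mul_inv_rev, Matrix.mul_inv_rev,
      Matrix.mul_inv_rev]
    simp only [← mul_assoc]
    rw [mul_assoc _ R⁻¹ R, hRiR, mul_one, mul_assoc _ R⁻¹ R, hRiR, mul_one,
      mul_assoc _ R R⁻¹, hRRi, mul_one]
  refine ⟨hmain, ?_⟩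
  rw [hmain]
  set Gh := (1 + β • S)⁻¹ * (S - β • (1 : Matrix (Fin n) (Fin n) ℝ)) *
      (α • (1 : Matrix (Fin n) (Fin n) ℝ) + S)⁻¹ * (1 - α • S) with hGh
  let f : Matrix (Fin n) (Fin n) ℝ →+* Matrix (Fin n) (Fin n) ℂ :=
    Complex.ofRealHom.mapMatrix
  have hmapeq : ∀ A : Matrix (Fin n) (Fin n) ℝ, A.map Complex.ofReal = f A := fun A => rfl
  let u : (Matrix (Fin n) (Fin n) ℂ)ˣ := Units.map (f : _ →* _) hRunit.unit
  have hu : (u : Matrix (Fin n) (Fin n) ℂ) = f R := by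
    simp [u, f, hRunit.unit_spec]
  have hu' : ((u⁻¹ : (Matrix (Fin n) (Fin n) ℂ)ˣ) : Matrix (Fin n) (Fin n) ℂ) = f R⁻¹ := by
    have h1 : ((hRunit.unit⁻¹ : (Matrix (Fin n) (Fin n) ℝ)ˣ) : Matrix (Fin n) (Fin n) ℝ)
        = (↑hRunit.unit : Matrix (Fin n) (Fin n) ℝ)⁻¹ := coe_units_inv _
    rw [hRunit.unit_spec] at h1
    calc ((u⁻¹ : (Matrix (Fin n) (Fin n) ℂ)ˣ) : Matrix (Fin n) (Fin n) ℂ)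
        = f ((hRunit.unit⁻¹ : (Matrix (Fin n) (Fin n) ℝ)ˣ) : Matrix (Fin n) (Fin n) ℝ) := rfl
      _ = f R⁻¹ := by rw [h1]
  rw [hmapeq, hmapeq, _root_.map_mul f, _root_.map_mul f, ← hu, ← hu']
  exact spectrum.units_conjugate' (a := f Gh) (u := u)
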